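/- Fix an integer m ≥ 1 and set N := 2m+1. Call a real N-dimensional linear subspace W of (ℝ×ℝ)^N (a real vector space of dimension 2N) admissible if Im_τ q vanishes identically on W × W (W is Lagrangian) and Re_τ q is negative definite on W. Then for any two admissible subspaces W₁ and W₂ there exist a matrix M ∈ SU(N, ℝ_τ, Q) and a unit para-complex scalar u = (s, t) with s·t = 1 such that M(W₁) = u·W₂ := {u·z : z ∈ W₂}. (This is the transitivity of SL(2m+1,ℝ) ≅ SU(2m+1, ℝ_τ, Q) on the space 𝒩 of totally geodesic Lagrangian negative definite subspaces of the para-complex hyperbolic space ℍ_τ^{2m}, which realizes 𝒩 as the symmetric space SL(2m+1,ℝ)/SO(2m+1).) -/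

import Mathlib

open Matrix

/-- The `n × n` real antidiagonal matrix with all antidiagonal entries equal to `1`. -/
noncomputable def Qmat (n : ℕ) : Matrix (Fin n) (Fin n) ℝ :=
  Matrix.of fun i j => if (i : ℕ) + (j : ℕ) + 1 = n then (1 : ℝ) else 0

/-- The para-Hermitian form `q(z, z') = (vᵗQw') e₊ + (wᵗQv') e₋` on `ℝ_τⁿ`, where the
para-complex numbers are modeled by `ℝ × ℝ` (so `z i = (v i, w i)`). -/
noncomputable def paraq (n : ℕ) (z z' : Fin n → ℝ × ℝ) : ℝ × ℝ :=
  ((fun i => (z i).1) ⬝ᵥ (Qmat n).mulVec (fun i => (z' i).2),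
   (fun i => (z i).2) ⬝ᵥ (Qmat n).mulVec (fun i => (z' i).1))

/-- The real part `Re_τ q` of the para-Hermitian form. -/
noncomputable def Retau (n : ℕ) (z z' : Fin n → ℝ × ℝ) : ℝ :=
  ((paraq n z z').1 + (paraq n z z').2) / 2

/-- The τ-imaginary part `Im_τ q` of the para-Hermitian form. -/
noncomputable def Imtau (n : ℕ) (z z' : Fin n → ℝ × ℝ) : ℝ :=
  ((paraq n z z').1 - (paraq n z z').2) / 2

/-- A real `N`-dimensional subspace of `ℝ_τ^N ≅ (ℝ×ℝ)^N` is admissible if it is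
Lagrangian for `Im_τ q` and `Re_τ q` is negative definite on it. -/
def IsAdmissible (N : ℕ) (W : Submodule ℝ (Fin N → ℝ × ℝ)) : Prop :=
  Module.finrank ℝ ↥W = N ∧
  (∀ z ∈ W, ∀ z' ∈ W, Imtau N z z' = 0) ∧
  (∀ z ∈ W, z ≠ 0 → Retau N z z < 0)

namespace SUaux

variable {n : ℕ}

/-- glue two real vectors into a para-complex vector -/
def glue (v w : Fin n → ℝ) : Fin n → ℝ × ℝ := fun i => (v i, w i)

def p1 (z : Fin n → ℝ × ℝ) : Fin n → ℝ := fun i => (z i).1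
def p2 (z : Fin n → ℝ × ℝ) : Fin n → ℝ := fun i => (z i).2

@[simp] lemma p1_glue (v w : Fin n → ℝ) : p1 (glue v w) = v := rfl
@[simp] lemma p2_glue (v w : Fin n → ℝ) : p2 (glue v w) = w := rfl

lemma glue_p1_p2 (z : Fin n → ℝ × ℝ) : glue (p1 z) (p2 z) = z := rfl

lemma paraq_eq (z z' : Fin n → ℝ × ℝ) :
    paraq n z z' = (p1 z ⬝ᵥ (Qmat n).mulVec (p2 z'), p2 z ⬝ᵥ (Qmat n).mulVec (p1 z')) := rfl

/-- the bilinear form of a matrix -/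
def bf (M : Matrix (Fin n) (Fin n) ℝ) (v w : Fin n → ℝ) : ℝ := v ⬝ᵥ M.mulVec w

lemma bf_mul (P M R : Matrix (Fin n) (Fin n) ℝ) (v w : Fin n → ℝ) :
    bf (Pᵀ * M * R) v w = bf M (P.mulVec v) (R.mulVec w) := by
  rw [bf, bf, mulVec_mulVec, dotProduct_mulVec, dotProduct_mulVec,
    ← vecMul_transpose, vecMul_vecMul, Matrix.mul_assoc]

lemma ext_of_bf {M M' : Matrix (Fin n) (Fin n) ℝ}
    (h : ∀ v w, bf M v w = bf M' v w) : M = M' := by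
  ext i j
  have := h (Pi.single i 1) (Pi.single j 1)
  simpa [bf, mulVec_single, single_dotProduct] using this

lemma bf_transpose (M : Matrix (Fin n) (Fin n) ℝ) (v w : Fin n → ℝ) :
    bf Mᵀ v w = bf M w v := by
  simp only [bf, dotProduct_mulVec, vecMul_transpose]
  rw [dotProduct_comm, dotProduct_mulVec]

lemma Qmat_transpose : (Qmat n)ᵀ = Qmat n := by
  ext i j
  simp only [Qmat, transpose_apply, of_apply]
  rw [show (j : ℕ) + i + 1 = (i : ℕ) + j + 1 by omega]

lemma Qmat_mulVec (v : Fin n → ℝ) : (Qmat n).mulVec v = fun i => v i.rev := by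
  funext i
  simp only [Matrix.mulVec, dotProduct, Qmat, of_apply]
  rw [Finset.sum_eq_single i.rev]
  · have hi : (i : ℕ) < n := i.isLt
    rw [Fin.val_rev, if_pos (by omega), one_mul]
  · intro j _ hj
    rw [if_neg, zero_mul]
    intro hc
    have hi : (i : ℕ) < n := i.isLt
    have hj' : (j : ℕ) < n := j.isLt
    exact hj (Fin.ext (by rw [Fin.val_rev]; omega))
  · simp

lemma Qmat_mul_Qmat : Qmat n * Qmat n = 1 := by
  have h : ∀ v : Fin n → ℝ, (Qmat n * Qmat n).mulVec v = v := by
    intro v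
    rw [← mulVec_mulVec, Qmat_mulVec, Qmat_mulVec]
    funext i; simp
  ext i j
  have := congrFun (h (Pi.single j 1)) i
  simpa [mulVec_single, Pi.single_apply, one_apply, eq_comm] using this

/-- pair of real matrices as a matrix over ℝ × ℝ -/
def pm (P R : Matrix (Fin n) (Fin n) ℝ) : Matrix (Fin n) (Fin n) (ℝ × ℝ) :=
  Matrix.of fun i j => (P i j, R i j)

lemma pm_mulVec (P R : Matrix (Fin n) (Fin n) ℝ) (z : Fin n → ℝ × ℝ) :
    (pm P R).mulVec z = glue (P.mulVec (p1 z)) (R.mulVec (p2 z)) := by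
  funext i
  refine Prod.ext ?_ ?_
  · simp [pm, glue, p1, Matrix.mulVec, dotProduct, Prod.fst_sum]
  · simp [pm, glue, p2, Matrix.mulVec, dotProduct, Prod.snd_sum]

lemma pm_det (P R : Matrix (Fin n) (Fin n) ℝ) :
    (pm P R).det = (P.det, R.det) := by
  refine Prod.ext ?_ ?_
  · exact (RingHom.map_det (RingHom.fst ℝ ℝ) (pm P R)).trans
      (congrArg Matrix.det (rfl : (RingHom.fst ℝ ℝ).mapMatrix (pm P R) = P))
  · exact (RingHom.map_det (RingHom.snd ℝ ℝ) (pm P R)).trans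
      (congrArg Matrix.det (rfl : (RingHom.snd ℝ ℝ).mapMatrix (pm P R) = R))

/-- first projection as a linear map -/
def p1L (n : ℕ) : (Fin n → ℝ × ℝ) →ₗ[ℝ] (Fin n → ℝ) where
  toFun := p1
  map_add' := fun _ _ => rfl
  map_smul' := fun _ _ => rfl

def p2L (n : ℕ) : (Fin n → ℝ × ℝ) →ₗ[ℝ] (Fin n → ℝ) where
  toFun := p2
  map_add' := fun _ _ => rfl
  map_smul' := fun _ _ => rfl

/-- An admissible subspace is the graph of a matrix `S` with `Qmat * S` symmetric
negative definite. -/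
lemma exists_graph {N : ℕ} {W : Submodule ℝ (Fin N → ℝ × ℝ)} (h : IsAdmissible N W) :
    ∃ S : Matrix (Fin N) (Fin N) ℝ,
      (Qmat N * S)ᵀ = Qmat N * S ∧
      (∀ v, v ≠ 0 → bf (Qmat N * S) v v < 0) ∧
      (∀ z, z ∈ W ↔ p2 z = S.mulVec (p1 z)) := by
  obtain ⟨hrk, hlag, hneg⟩ := h
  -- p1 is injective on W
  have hp1 : ∀ z ∈ W, p1 z = 0 → z = 0 := by
    intro z hz hp
    by_contra hne
    have h1 := hneg z hz hne
    have h2 : Retau N z z = 0 := by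
      simp [Retau, paraq_eq, hp]
    linarith
  set f : ↥W →ₗ[ℝ] (Fin N → ℝ) := (p1L N).comp W.subtype with hf
  have hfinj : Function.Injective f := by
    rw [injective_iff_map_eq_zero]
    intro a ha
    exact Subtype.ext (hp1 a a.2 ha)
  have hdim : Module.finrank ℝ ↥W = Module.finrank ℝ (Fin N → ℝ) := by
    rw [hrk, Module.finrank_fin_fun]
  set e : ↥W ≃ₗ[ℝ] (Fin N → ℝ) := LinearMap.linearEquivOfInjective f hfinj hdim with he
  have heapp : ∀ zw : ↥W, e zw = p1 (zw : Fin N → ℝ × ℝ) := fun zw =>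
    LinearMap.linearEquivOfInjective_apply hfinj hdim zw
  set T : (Fin N → ℝ) →ₗ[ℝ] (Fin N → ℝ) :=
    ((p2L N).comp W.subtype).comp (e.symm : (Fin N → ℝ) →ₗ[ℝ] ↥W) with hT
  set S : Matrix (Fin N) (Fin N) ℝ := LinearMap.toMatrix' T with hS
  have hSapp : ∀ v, S.mulVec v = p2 ((e.symm v : ↥W) : Fin N → ℝ × ℝ) := by
    intro v
    have h1 : Matrix.toLin' S = T := Matrix.toLin'_toMatrix' T
    calc S.mulVec v = Matrix.toLin' S v := (Matrix.toLin'_apply S v).symm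
      _ = T v := by rw [h1]
      _ = p2 ((e.symm v : ↥W) : Fin N → ℝ × ℝ) := rfl
  have hmem : ∀ z, z ∈ W ↔ p2 z = S.mulVec (p1 z) := by
    intro z
    constructor
    · intro hz
      have h1 : e.symm (p1 z) = ⟨z, hz⟩ := by
        rw [LinearEquiv.symm_apply_eq, heapp]
      rw [hSapp, h1]
    · intro hz2
      set zw : ↥W := e.symm (p1 z) with hzw
      have h1 : p1 (zw : Fin N → ℝ × ℝ) = p1 z := by
        rw [← heapp zw, hzw, LinearEquiv.apply_symm_apply]
      have h2 : p2 (zw : Fin N → ℝ × ℝ) = p2 z := by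
        rw [← hSapp, hz2]
      have h3 : z = (zw : Fin N → ℝ × ℝ) := by
        funext i
        exact Prod.ext (congrFun h1.symm i) (congrFun h2.symm i)
      rw [h3]
      exact zw.2
  have hgraph : ∀ v, glue v (S.mulVec v) ∈ W := fun v => (hmem _).mpr rfl
  -- the Lagrangian condition gives symmetry
  have him : ∀ v w, bf (Qmat N * S) v w = bf (Qmat N) (S.mulVec v) w := by
    intro v w
    have h0 := hlag _ (hgraph v) _ (hgraph w)
    have h1 : (paraq N (glue v (S.mulVec v)) (glue w (S.mulVec w))).1
        = bf (Qmat N * S) v w := by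
      rw [paraq_eq]
      simp only [p1_glue, p2_glue, bf, mulVec_mulVec]
    have h2 : (paraq N (glue v (S.mulVec v)) (glue w (S.mulVec w))).2
        = bf (Qmat N) (S.mulVec v) w := by
      rw [paraq_eq]
      simp only [p1_glue, p2_glue, bf]
    have h3 : (paraq N (glue v (S.mulVec v)) (glue w (S.mulVec w))).1
        = (paraq N (glue v (S.mulVec v)) (glue w (S.mulVec w))).2 := by
      have := h0
      rw [Imtau] at this
      linarith
    rw [← h1, h3, h2]
  have hsym : (Qmat N * S)ᵀ = Qmat N * S := by
    apply ext_of_bf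
    intro v w
    have h1 : (Qmat N * S)ᵀ = Sᵀ * Qmat N * 1 := by
      rw [transpose_mul, Qmat_transpose, Matrix.mul_one]
    rw [h1, bf_mul, one_mulVec, ← him]
  refine ⟨S, hsym, ?_, hmem⟩
  intro v hv
  have hzne : glue v (S.mulVec v) ≠ 0 := by
    intro hc
    apply hv
    have := congrArg p1 hc
    exact this
  have h4 := hneg _ (hgraph v) hzne
  have h5 : Retau N (glue v (S.mulVec v)) (glue v (S.mulVec v)) = bf (Qmat N * S) v v := by
    rw [Retau, paraq_eq]
    simp only [p1_glue, p2_glue]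
    have h1 : v ⬝ᵥ (Qmat N).mulVec (S.mulVec v) = bf (Qmat N * S) v v := by
      rw [bf, mulVec_mulVec]
    have h2 : (S.mulVec v) ⬝ᵥ (Qmat N).mulVec v = bf (Qmat N * S) v v :=
      (him v v).symm
    rw [h1, h2]
    ring
  linarith [h5 ▸ h4]

lemma smul_glue (u : ℝ × ℝ) (a b : Fin n → ℝ) :
    u • glue a b = glue (u.1 • a) (u.2 • b) := rfl

lemma odd_root_exists {N : ℕ} (hN : Odd N) {c : ℝ} (hc : c ≠ 0) :
    ∃ μ : ℝ, μ ≠ 0 ∧ μ ^ N = c := by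
  have hN0 : N ≠ 0 := by rintro rfl; exact (Nat.not_odd_iff_even.mpr Even.zero) hN
  rcases hc.lt_or_gt with hlt | hgt
  · refine ⟨-((-c) ^ ((N : ℝ)⁻¹)), ?_, ?_⟩
    · have h1 : (0:ℝ) < (-c) ^ ((N:ℝ)⁻¹) := Real.rpow_pos_of_pos (by linarith) _
      intro hc0; rw [neg_eq_zero] at hc0; linarith
    · rw [Odd.neg_pow hN, Real.rpow_inv_natCast_pow (by linarith) hN0, neg_neg]
  · refine ⟨c ^ ((N:ℝ)⁻¹), ?_, ?_⟩
    · have h1 : (0:ℝ) < c ^ ((N:ℝ)⁻¹) := Real.rpow_pos_of_pos hgt _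
      linarith
    · exact Real.rpow_inv_natCast_pow hgt.le hN0

end SUaux

open SUaux in
set_option maxHeartbeats 1000000 in
theorem SU_transitive_on_lagrangian_negative_definite (m : ℕ) (hm : 1 ≤ m)
    (W₁ W₂ : Submodule ℝ (Fin (2 * m + 1) → ℝ × ℝ))
    (h₁ : IsAdmissible (2 * m + 1) W₁) (h₂ : IsAdmissible (2 * m + 1) W₂) :
    ∃ M : Matrix (Fin (2 * m + 1)) (Fin (2 * m + 1)) (ℝ × ℝ), IsUnit M ∧
      (∀ z z' : Fin (2 * m + 1) → ℝ × ℝ,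
        paraq (2 * m + 1) (M.mulVec z) (M.mulVec z') = paraq (2 * m + 1) z z') ∧
      M.det = (1, 1) ∧
      ∃ u : ℝ × ℝ, u.1 * u.2 = 1 ∧
        (fun z => M.mulVec z) '' (W₁ : Set (Fin (2 * m + 1) → ℝ × ℝ)) =
          (fun z => u • z) '' (W₂ : Set (Fin (2 * m + 1) → ℝ × ℝ)) := by
  classical
  obtain ⟨S₁, hsym₁, hneg₁, hmem₁⟩ := exists_graph h₁
  obtain ⟨S₂, hsym₂, hneg₂, hmem₂⟩ := exists_graph h₂
  set Q := Qmat (2 * m + 1) with hQdef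
  have hQQ : Q * Q = 1 := Qmat_mul_Qmat
  have hQt : Qᵀ = Q := Qmat_transpose
  set A₁ := Q * S₁ with hA₁def
  set A₂ := Q * S₂ with hA₂def
  -- positive definiteness of -Aᵢ
  have hpos₁ : (-A₁).PosDef := by
    refine PosDef.of_dotProduct_mulVec_pos ?_ ?_
    · show (-A₁)ᴴ = -A₁
      rw [conjTranspose_eq_transpose_of_trivial, transpose_neg, hsym₁]
    · intro x hx
      have hb : x ⬝ᵥ A₁.mulVec x < 0 := hneg₁ x hx
      simp only [star_trivial, neg_mulVec, dotProduct_neg]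
      linarith
  have hpos₂ : (-A₂).PosDef := by
    refine PosDef.of_dotProduct_mulVec_pos ?_ ?_
    · show (-A₂)ᴴ = -A₂
      rw [conjTranspose_eq_transpose_of_trivial, transpose_neg, hsym₂]
    · intro x hx
      have hb : x ⬝ᵥ A₂.mulVec x < 0 := hneg₂ x hx
      simp only [star_trivial, neg_mulVec, dotProduct_neg]
      linarith
  obtain ⟨B₁, hB₁sq, hB₁sym⟩ :
      ∃ B : Matrix (Fin (2 * m + 1)) (Fin (2 * m + 1)) ℝ, B * B = -A₁ ∧ Bᵀ = B := by
    open scoped MatrixOrder in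
    refine ⟨CFC.sqrt (-A₁), CFC.sqrt_mul_sqrt_self (-A₁) hpos₁.posSemidef.nonneg, ?_⟩
    open scoped MatrixOrder in
    have h := (CFC.sqrt_nonneg (-A₁)).posSemidef.isHermitian.eq
    rwa [conjTranspose_eq_transpose_of_trivial] at h
  obtain ⟨B₂, hB₂sq, hB₂sym⟩ :
      ∃ B : Matrix (Fin (2 * m + 1)) (Fin (2 * m + 1)) ℝ, B * B = -A₂ ∧ Bᵀ = B := by
    open scoped MatrixOrder in
    refine ⟨CFC.sqrt (-A₂), CFC.sqrt_mul_sqrt_self (-A₂) hpos₂.posSemidef.nonneg, ?_⟩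
    open scoped MatrixOrder in
    have h := (CFC.sqrt_nonneg (-A₂)).posSemidef.isHermitian.eq
    rwa [conjTranspose_eq_transpose_of_trivial] at h
  have hdetB₁ : B₁.det ≠ 0 := by
    have h2 : B₁.det * B₁.det = (-A₁).det := by rw [← det_mul, hB₁sq]
    intro h0
    rw [h0, zero_mul] at h2
    exact hpos₁.det_pos.ne' h2.symm
  have hdetB₂ : B₂.det ≠ 0 := by
    have h2 : B₂.det * B₂.det = (-A₂).det := by rw [← det_mul, hB₂sq]
    intro h0
    rw [h0, zero_mul] at h2
    exact hpos₂.det_pos.ne' h2.symm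
  have hB₁u : IsUnit B₁.det := isUnit_iff_ne_zero.mpr hdetB₁
  have hB₂u : IsUnit B₂.det := isUnit_iff_ne_zero.mpr hdetB₂
  obtain ⟨μ, hμ0, hμN⟩ := odd_root_exists (N := 2 * m + 1) ⟨m, by omega⟩
    (div_ne_zero hdetB₁ hdetB₂)
  set H := μ • (B₁⁻¹ * B₂) with hHdef
  have hA₁eq : A₁ = -(B₁ * B₁) := by rw [hB₁sq, neg_neg]
  have hA₂eq : A₂ = -(B₂ * B₂) := by rw [hB₂sq, neg_neg]
  have hmid : B₁⁻¹ * A₁ * B₁⁻¹ = -1 := by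
    rw [hA₁eq]
    calc B₁⁻¹ * -(B₁ * B₁) * B₁⁻¹ = -((B₁⁻¹ * B₁) * (B₁ * B₁⁻¹)) := by noncomm_ring
      _ = -1 := by rw [nonsing_inv_mul _ hB₁u, mul_nonsing_inv _ hB₁u, Matrix.one_mul]
  have hHt : Hᵀ = μ • (B₂ * B₁⁻¹) := by
    rw [hHdef, transpose_smul, transpose_mul, transpose_nonsing_inv, hB₁sym, hB₂sym]
  have hkeyA : Hᵀ * A₁ * H = (μ ^ 2) • A₂ := by
    rw [hHt, hHdef]
    calc (μ • (B₂ * B₁⁻¹)) * A₁ * (μ • (B₁⁻¹ * B₂))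
        = (μ * μ) • (B₂ * (B₁⁻¹ * A₁ * B₁⁻¹) * B₂) := by
          simp only [smul_mul_assoc, mul_smul_comm, smul_smul]
          congr 1
          noncomm_ring
      _ = (μ * μ) • (B₂ * (-1) * B₂) := by rw [hmid]
      _ = (μ ^ 2) • A₂ := by
          rw [hA₂eq, pow_two]
          congr 1
          noncomm_ring
  have hdetH : H.det = 1 := by
    rw [hHdef, det_smul, Fintype.card_fin, det_mul, det_nonsing_inv, hμN,
      Ring.inverse_eq_inv']
    field_simp
  have hHu : IsUnit H.det := by rw [hdetH]; exact isUnit_one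
  have hHtu : IsUnit Hᵀ.det := by rw [det_transpose, hdetH]; exact isUnit_one
  set P := H⁻¹ with hPdef
  set R := Q * Hᵀ * Q with hRdef
  have hdetP : P.det = 1 := by rw [hPdef, det_nonsing_inv, hdetH, Ring.inverse_one]
  have hQdet2 : Q.det * Q.det = 1 := by rw [← det_mul, hQQ, det_one]
  have hdetR : R.det = 1 := by
    rw [hRdef, det_mul, det_mul, det_transpose, hdetH, mul_one]
    exact hQdet2
  have hPt : Pᵀ = (Hᵀ)⁻¹ := by rw [hPdef, transpose_nonsing_inv]
  have hPQR : Pᵀ * Q * R = Q := by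
    rw [hPt, hRdef]
    calc (Hᵀ)⁻¹ * Q * (Q * Hᵀ * Q) = (Hᵀ)⁻¹ * (Q * Q) * (Hᵀ * Q) := by noncomm_ring
      _ = (Hᵀ)⁻¹ * (Hᵀ * Q) := by rw [hQQ, Matrix.mul_one]
      _ = ((Hᵀ)⁻¹ * Hᵀ) * Q := by rw [Matrix.mul_assoc]
      _ = Q := by rw [nonsing_inv_mul _ hHtu, Matrix.one_mul]
  have hRt : Rᵀ = Q * H * Q := by
    rw [hRdef, transpose_mul, transpose_mul, transpose_transpose, hQt,
      Matrix.mul_assoc]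
  have hRQP : Rᵀ * Q * P = Q := by
    rw [hRt, hPdef]
    calc (Q * H * Q) * Q * H⁻¹ = Q * (H * ((Q * Q) * H⁻¹)) := by noncomm_ring
      _ = Q * (H * H⁻¹) := by rw [hQQ, Matrix.one_mul]
      _ = Q := by rw [mul_nonsing_inv _ hHu, Matrix.mul_one]
  -- the key relation between the two graphs
  have hHA : Hᵀ * A₁ = (μ ^ 2) • (A₂ * H⁻¹) := by
    have h5 : Hᵀ * A₁ * H * H⁻¹ = ((μ ^ 2) • A₂) * H⁻¹ := by rw [hkeyA]
    rw [Matrix.mul_assoc, mul_nonsing_inv _ hHu, Matrix.mul_one] at h5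
    rw [h5, smul_mul_assoc]
  have hkey : R * S₁ = (μ ^ 2) • (S₂ * P) := by
    have hS₂' : Q * A₂ = S₂ := by rw [hA₂def, ← Matrix.mul_assoc, hQQ, Matrix.one_mul]
    calc R * S₁ = Q * (Hᵀ * (Q * S₁)) := by rw [hRdef]; noncomm_ring
      _ = Q * (Hᵀ * A₁) := by rw [← hA₁def]
      _ = Q * ((μ ^ 2) • (A₂ * H⁻¹)) := by rw [hHA]
      _ = (μ ^ 2) • (Q * (A₂ * H⁻¹)) := by rw [mul_smul_comm]
      _ = (μ ^ 2) • ((Q * Q) * (S₂ * H⁻¹)) := by rw [hA₂def]; congr 1; noncomm_ring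
      _ = (μ ^ 2) • (S₂ * P) := by rw [hQQ, Matrix.one_mul, hPdef]
  refine ⟨pm P R, ?_, ?_, ?_, (μ⁻¹, μ), inv_mul_cancel₀ hμ0, ?_⟩
  · rw [Matrix.isUnit_iff_isUnit_det, pm_det, hdetP, hdetR]
    exact isUnit_one
  · intro z z'
    rw [pm_mulVec, pm_mulVec, paraq_eq, paraq_eq]
    have c1 := bf_mul P Q R (p1 z) (p2 z')
    rw [hPQR] at c1
    have c2 := bf_mul R Q P (p2 z) (p1 z')
    rw [hRQP] at c2
    simp only [p1_glue, p2_glue]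
    exact Prod.ext c1.symm c2.symm
  · rw [pm_det, hdetP, hdetR]
  · ext y
    simp only [Set.mem_image, SetLike.mem_coe]
    constructor
    · rintro ⟨z, hz, rfl⟩
      have hz' := (hmem₁ z).mp hz
      refine ⟨glue (μ • (P.mulVec (p1 z))) (μ⁻¹ • (R.mulVec (p2 z))), ?_, ?_⟩
      · apply (hmem₂ _).mpr
        simp only [p1_glue, p2_glue]
        rw [hz', mulVec_mulVec, hkey, smul_mulVec, mulVec_smul, mulVec_mulVec,
          smul_smul]
        rw [show μ⁻¹ * μ ^ 2 = μ by rw [pow_two, ← mul_assoc, inv_mul_cancel₀ hμ0, one_mul]]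
      · show (μ⁻¹, μ) • _ = _
        rw [pm_mulVec, smul_glue]
        have e1 : (μ⁻¹ : ℝ) • μ • (P.mulVec (p1 z)) = P.mulVec (p1 z) := by
          rw [smul_smul, inv_mul_cancel₀ hμ0, one_smul]
        have e2 : (μ : ℝ) • μ⁻¹ • (R.mulVec (p2 z)) = R.mulVec (p2 z) := by
          rw [smul_smul, mul_inv_cancel₀ hμ0, one_smul]
        show glue ((μ⁻¹:ℝ) • _) ((μ:ℝ) • _) = _
        rw [e1, e2]
    · rintro ⟨z', hz', rfl⟩
      have hz'2 := (hmem₂ z').mp hz'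
      set v : Fin (2 * m + 1) → ℝ := μ⁻¹ • (H.mulVec (p1 z')) with hv
      have ha : P.mulVec v = μ⁻¹ • p1 z' := by
        rw [hv, mulVec_smul, mulVec_mulVec, hPdef, nonsing_inv_mul _ hHu, one_mulVec]
      have hb : R.mulVec (S₁.mulVec v) = μ • p2 z' := by
        rw [mulVec_mulVec, hkey, smul_mulVec, ← mulVec_mulVec, ha, mulVec_smul,
          hz'2, smul_smul]
        rw [show μ ^ 2 * μ⁻¹ = μ by rw [pow_two, mul_assoc, mul_inv_cancel₀ hμ0, mul_one]]
      refine ⟨glue v (S₁.mulVec v), (hmem₁ _).mpr rfl, ?_⟩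
      rw [pm_mulVec]
      simp only [p1_glue, p2_glue]
      rw [ha, hb]
      rfl
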